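/- Let (Ω, P) be a probability space and let X : Fin 2 × Fin 2 → Fin N → Ω → ℝ be a mutually independent family of random variables, each taking values in {−1, 1}, with common mean μ(i,j) within each family (i,j). Let S = μ(0,0) + μ(1,0) + μ(0,1) − μ(1,1) and S̄ = m(0,0) + m(1,0) + m(0,1) − m(1,1) with m(i,j) = (1/N) ∑ₖ X (i,j) k. Let 0 < ε < 2√2 and 0 < δ < 1. If N ≥ (32/ε²)·ln(2/(1 − (1−δ)^(1/4))), then P[|S̄ − S| > ε] ≤ δ. -/

import Mathlib

open MeasureTheory ProbabilityTheory Finset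

noncomputable section

/-- Empirical mean `m(i,j) = (1/N) ∑ₖ X (i,j) k`. -/
def empMean {Ω : Type*} {N : ℕ} (X : Fin 2 × Fin 2 → Fin N → Ω → ℝ)
    (ij : Fin 2 × Fin 2) (ω : Ω) : ℝ :=
  (1 / N) * ∑ k, X ij k ω

/-- Empirical CHSH estimate `S̄ = m(0,0) + m(1,0) + m(0,1) − m(1,1)`. -/
def SbarEmp {Ω : Type*} {N : ℕ} (X : Fin 2 × Fin 2 → Fin N → Ω → ℝ) (ω : Ω) : ℝ :=
  empMean X (0, 0) ω + empMean X (1, 0) ω + empMean X (0, 1) ω - empMean X (1, 1) ω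

/-- True CHSH value `S = μ(0,0) + μ(1,0) + μ(0,1) − μ(1,1)`. -/
def Strue (μ : Fin 2 × Fin 2 → ℝ) : ℝ := μ (0, 0) + μ (1, 0) + μ (0, 1) - μ (1, 1)

end

/-- mgf bound for a centered random variable bounded by 2 in absolute value. -/
lemma mgf_le_of_abs_le_two {Ω : Type*} [MeasurableSpace Ω] (P : Measure Ω)
    [IsProbabilityMeasure P] {Y : Ω → ℝ} (hm : Measurable Y) (hb : ∀ ω, |Y ω| ≤ 2)
    (h0 : ∫ ω, Y ω ∂P = 0) (s : ℝ) : mgf Y P s ≤ Real.exp (2 * s ^ 2) := by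
  have hYint : Integrable Y P :=
    (integrable_const (2 : ℝ)).mono' hm.aestronglyMeasurable
      (Filter.Eventually.of_forall fun ω => by simpa using hb ω)
  set A := Real.exp (-(2 * s)) with hA
  set B := Real.exp (2 * s) with hB
  have key : ∀ ω, Real.exp (s * Y ω) ≤ (A + B) / 2 + Y ω * ((B - A) / 4) := by
    intro ω
    obtain ⟨hy1, hy2⟩ := abs_le.1 (hb ω)
    have h1 : (0 : ℝ) ≤ (2 - Y ω) / 4 := by linarith
    have h2 : (0 : ℝ) ≤ (2 + Y ω) / 4 := by linarith
    have h3 : (2 - Y ω) / 4 + (2 + Y ω) / 4 = 1 := by ring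
    have hc := convexOn_exp.2 (Set.mem_univ (-(2 * s))) (Set.mem_univ (2 * s)) h1 h2 h3
    simp only [smul_eq_mul] at hc
    have harg : (2 - Y ω) / 4 * (-(2 * s)) + (2 + Y ω) / 4 * (2 * s) = s * Y ω := by ring
    rw [harg] at hc
    calc Real.exp (s * Y ω) ≤ (2 - Y ω) / 4 * A + (2 + Y ω) / 4 * B := hc
      _ = (A + B) / 2 + Y ω * ((B - A) / 4) := by ring
  have hintE : Integrable (fun ω => Real.exp (s * Y ω)) P := by
    refine (integrable_const (Real.exp (|s| * 2))).mono'
      ((hm.const_mul s).exp).aestronglyMeasurable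
      (Filter.Eventually.of_forall fun ω => ?_)
    rw [Real.norm_eq_abs, abs_of_pos (Real.exp_pos _)]
    refine Real.exp_le_exp.2 ?_
    calc s * Y ω ≤ |s * Y ω| := le_abs_self _
      _ = |s| * |Y ω| := abs_mul _ _
      _ ≤ |s| * 2 := by
        exact mul_le_mul_of_nonneg_left (hb ω) (abs_nonneg s)
  have hintR : Integrable (fun ω => (A + B) / 2 + Y ω * ((B - A) / 4)) P :=
    (integrable_const _).add (hYint.mul_const _)
  have hmono := integral_mono hintE hintR key
  have hR : ∫ ω, ((A + B) / 2 + Y ω * ((B - A) / 4)) ∂P = (A + B) / 2 := by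
    rw [integral_add (integrable_const _) (hYint.mul_const _), integral_const,
      integral_mul_const, h0, probReal_univ]
    simp
  calc mgf Y P s = ∫ ω, Real.exp (s * Y ω) ∂P := rfl
    _ ≤ (A + B) / 2 := by rw [← hR]; exact hmono
    _ = Real.cosh (2 * s) := by rw [Real.cosh_eq, hA, hB]; ring
    _ ≤ Real.exp ((2 * s) ^ 2 / 2) := Real.cosh_le_exp_half_sq (2 * s)
    _ = Real.exp (2 * s ^ 2) := by ring_nf

/-- Hoeffding-based sample complexity for CHSH estimation: for `0 < ε < 2√2` and
`0 < δ < 1`, if `N ≥ (32/ε²)·ln(2/(1 − (1−δ)^(1/4)))` then `P[|S̄ − S| > ε] ≤ δ`. -/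
theorem hoeffding_chsh_sample_complexity {Ω : Type*} [MeasurableSpace Ω]
    (P : Measure Ω) [IsProbabilityMeasure P] (N : ℕ) (hN : 0 < N)
    (X : Fin 2 × Fin 2 → Fin N → Ω → ℝ)
    (hmeas : ∀ ij k, Measurable (X ij k))
    (hindep : iIndepFun
      (fun p : (Fin 2 × Fin 2) × Fin N => X p.1 p.2) P)
    (hval : ∀ ij k ω, X ij k ω = 1 ∨ X ij k ω = -1)
    (μ : Fin 2 × Fin 2 → ℝ)
    (hmean : ∀ ij k, ∫ ω, X ij k ω ∂P = μ ij)
    (ε δ : ℝ) (hε : 0 < ε) (hε' : ε < 2 * Real.sqrt 2) (hδ : 0 < δ) (hδ' : δ < 1)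
    (hNbig : (N : ℝ) ≥ (32 / ε ^ 2) * Real.log (2 / (1 - (1 - δ) ^ ((1 : ℝ) / 4)))) :
    (P {ω | ε < |SbarEmp X ω - Strue μ|}).toReal ≤ δ := by
  classical
  set σ : Fin 2 × Fin 2 → ℝ := fun ij => if ij = (1, 1) then (-1 : ℝ) else 1 with hσ
  haveI : NeZero N := ⟨hN.ne'⟩
  have hσ1 : ∀ ij, |σ ij| = 1 := by
    intro ij
    by_cases h : ij = (1, 1)
    · show |if ij = (1, 1) then (-1 : ℝ) else 1| = 1
      rw [if_pos h]; norm_num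
    · show |if ij = (1, 1) then (-1 : ℝ) else 1| = 1
      rw [if_neg h]; norm_num
  have hXint : ∀ ij k, Integrable (X ij k) P := fun ij k =>
    (integrable_const (1 : ℝ)).mono' (hmeas ij k).aestronglyMeasurable
      (Filter.Eventually.of_forall fun ω => by rcases hval ij k ω with h | h <;> simp [h])
  have hμ1 : ∀ ij, |μ ij| ≤ 1 := by
    intro ij
    rw [← hmean ij ⟨0, hN⟩]
    have := norm_integral_le_of_norm_le_const (μ := P) (f := X ij ⟨0, hN⟩) (C := 1)
      (Filter.Eventually.of_forall fun ω => by rcases hval ij ⟨0, hN⟩ ω with h | h <;> rw [Real.norm_eq_abs, h] <;> norm_num)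
    simpa using this
  set Y : (Fin 2 × Fin 2) × Fin N → Ω → ℝ := fun p ω => σ p.1 * (X p.1 p.2 ω - μ p.1) with hYdef
  have hYmeas : ∀ p, Measurable (Y p) := fun p => ((hmeas p.1 p.2).sub_const _).const_mul _
  have hYb : ∀ p ω, |Y p ω| ≤ 2 := by
    intro p ω
    rw [hYdef]
    simp only
    rw [abs_mul, hσ1, one_mul]
    calc |X p.1 p.2 ω - μ p.1| ≤ |X p.1 p.2 ω| + |μ p.1| := abs_sub _ _
      _ ≤ 1 + 1 := add_le_add (by rcases hval p.1 p.2 ω with h | h <;> simp [h]) (hμ1 p.1)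
      _ = 2 := by norm_num
  have hY0 : ∀ p, ∫ ω, Y p ω ∂P = 0 := by
    intro p
    rw [hYdef]
    simp only
    rw [integral_const_mul, integral_sub (hXint p.1 p.2) (integrable_const _), integral_const,
      hmean, probReal_univ]
    simp
  have hYindep : iIndepFun Y P := by
    have := hindep.comp (fun p (x : ℝ) => σ p.1 * (x - μ p.1))
      (fun p => (measurable_id.sub_const _).const_mul _)
    exact this
  -- mgf bound for the sum
  have hcard : (Finset.univ : Finset ((Fin 2 × Fin 2) × Fin N)).card = 4 * N := by
    simp [Finset.card_univ]
  have hmgf : ∀ s : ℝ, mgf (∑ p, Y p) P s ≤ Real.exp (8 * N * s ^ 2) := by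
    intro s
    rw [hYindep.mgf_sum hYmeas]
    calc ∏ p, mgf (Y p) P s ≤ ∏ _p : (Fin 2 × Fin 2) × Fin N, Real.exp (2 * s ^ 2) :=
        Finset.prod_le_prod (fun p _ => mgf_nonneg)
          (fun p _ => mgf_le_of_abs_le_two P (hYmeas p) (hYb p) (hY0 p) s)
      _ = Real.exp (8 * N * s ^ 2) := by
        rw [Finset.prod_const, ← Real.exp_nat_mul, hcard]
        congr 1
        push_cast
        ring
  have hTb : ∀ ω, |(∑ p, Y p) ω| ≤ 8 * N := by
    intro ω
    rw [Finset.sum_apply]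
    calc |∑ p, Y p ω| ≤ ∑ p, |Y p ω| := Finset.abs_sum_le_sum_abs _ _
      _ ≤ ∑ _p : (Fin 2 × Fin 2) × Fin N, (2 : ℝ) :=
        Finset.sum_le_sum fun p _ => hYb p ω
      _ = 8 * N := by
        rw [Finset.sum_const, hcard]
        push_cast
        ring
  have hTfun : (∑ p : (Fin 2 × Fin 2) × Fin N, Y p) = fun ω => ∑ p, Y p ω := by
    funext ω; simp [Finset.sum_apply]
  have hTmeas : Measurable (∑ p, Y p) := by
    rw [hTfun]
    exact Finset.measurable_sum (Finset.univ : Finset ((Fin 2 × Fin 2) × Fin N))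
      (fun p _ => hYmeas p)
  have hTint : ∀ s : ℝ, Integrable (fun ω => Real.exp (s * (∑ p, Y p) ω)) P := by
    intro s
    refine (integrable_const (Real.exp (|s| * (8 * N)))).mono'
      ((hTmeas.const_mul s).exp).aestronglyMeasurable
      (Filter.Eventually.of_forall fun ω => ?_)
    rw [Real.norm_eq_abs, abs_of_pos (Real.exp_pos _)]
    refine Real.exp_le_exp.2 ?_
    calc s * (∑ p, Y p) ω ≤ |s * (∑ p, Y p) ω| := le_abs_self _
      _ = |s| * |(∑ p, Y p) ω| := abs_mul _ _
      _ ≤ |s| * (8 * N) := mul_le_mul_of_nonneg_left (hTb ω) (abs_nonneg s)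
  -- Chernoff with s = ε/16
  have hup : (P {ω | (N : ℝ) * ε ≤ (∑ p, Y p) ω}).toReal ≤ Real.exp (-(N * ε ^ 2 / 32)) := by
    calc (P {ω | (N : ℝ) * ε ≤ (∑ p, Y p) ω}).toReal
        ≤ Real.exp (-(ε / 16) * (N * ε)) * mgf (∑ p, Y p) P (ε / 16) :=
          measure_ge_le_exp_mul_mgf (N * ε) (by positivity) (hTint _)
      _ ≤ Real.exp (-(ε / 16) * (N * ε)) * Real.exp (8 * N * (ε / 16) ^ 2) :=
          mul_le_mul_of_nonneg_left (hmgf _) (Real.exp_pos _).le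
      _ = Real.exp (-(N * ε ^ 2 / 32)) := by rw [← Real.exp_add]; congr 1; ring
  have hlow : (P {ω | (∑ p, Y p) ω ≤ -((N : ℝ) * ε)}).toReal ≤
      Real.exp (-(N * ε ^ 2 / 32)) := by
    calc (P {ω | (∑ p, Y p) ω ≤ -((N : ℝ) * ε)}).toReal
        ≤ Real.exp (-(-(ε / 16)) * -((N : ℝ) * ε)) * mgf (∑ p, Y p) P (-(ε / 16)) :=
          measure_le_le_exp_mul_mgf (-((N : ℝ) * ε)) (by simp; positivity) (hTint _)
      _ ≤ Real.exp (-(-(ε / 16)) * -((N : ℝ) * ε)) * Real.exp (8 * N * (-(ε / 16)) ^ 2) :=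
          mul_le_mul_of_nonneg_left (hmgf _) (Real.exp_pos _).le
      _ = Real.exp (-(N * ε ^ 2 / 32)) := by rw [← Real.exp_add]; congr 1; ring
  -- Identity: the sum equals N * (S̄ − S)
  have hNne : (N : ℝ) ≠ 0 := Nat.cast_ne_zero.2 hN.ne'
  have hTeq : ∀ ω, (∑ p, Y p) ω = N * (SbarEmp X ω - Strue μ) := by
    intro ω
    rw [Finset.sum_apply]
    have expand : ∑ p : (Fin 2 × Fin 2) × Fin N, Y p ω
        = ∑ ij : Fin 2 × Fin 2, σ ij * ((∑ k, X ij k ω) - N * μ ij) := by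
      rw [Fintype.sum_prod_type]
      refine Finset.sum_congr rfl fun ij _ => ?_
      rw [hYdef]
      simp only [mul_sub, Finset.sum_sub_distrib, Finset.mul_sum, Finset.sum_const,
        nsmul_eq_mul, Finset.card_univ, Fintype.card_fin]
      ring
    rw [expand]
    simp only [Fintype.sum_prod_type, Fin.sum_univ_two]
    have e00 : σ (0, 0) = 1 := by norm_num [hσ, Prod.ext_iff]
    have e01 : σ (0, 1) = 1 := by norm_num [hσ, Prod.ext_iff]
    have e10 : σ (1, 0) = 1 := by norm_num [hσ, Prod.ext_iff]
    have e11 : σ (1, 1) = -1 := by norm_num [hσ, Prod.ext_iff]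
    rw [e00, e01, e10, e11]
    simp only [SbarEmp, empMean, Strue]
    field_simp
    ring
  -- union bound
  have hsub : {ω | ε < |SbarEmp X ω - Strue μ|} ⊆
      {ω | (N : ℝ) * ε ≤ (∑ p, Y p) ω} ∪ {ω | (∑ p, Y p) ω ≤ -((N : ℝ) * ε)} := by
    intro ω hω
    simp only [Set.mem_setOf_eq] at hω
    have hNpos : (0 : ℝ) < N := by exact_mod_cast hN
    rcases lt_abs.1 hω with h | h
    · left
      simp only [Set.mem_setOf_eq]
      rw [hTeq ω]
      nlinarith
    · right
      simp only [Set.mem_setOf_eq]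
      rw [hTeq ω]
      nlinarith
  have hPbad : (P {ω | ε < |SbarEmp X ω - Strue μ|}).toReal ≤
      2 * Real.exp (-(N * ε ^ 2 / 32)) := by
    have h1 : P {ω | ε < |SbarEmp X ω - Strue μ|} ≤
        P {ω | (N : ℝ) * ε ≤ (∑ p, Y p) ω} + P {ω | (∑ p, Y p) ω ≤ -((N : ℝ) * ε)} :=
      (measure_mono hsub).trans (measure_union_le _ _)
    have h2 : (P {ω | ε < |SbarEmp X ω - Strue μ|}).toReal ≤
        (P {ω | (N : ℝ) * ε ≤ (∑ p, Y p) ω}).toReal +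
          (P {ω | (∑ p, Y p) ω ≤ -((N : ℝ) * ε)}).toReal := by
      rw [← ENNReal.toReal_add (measure_ne_top _ _) (measure_ne_top _ _)]
      exact ENNReal.toReal_mono
        (ENNReal.add_ne_top.2 ⟨measure_ne_top _ _, measure_ne_top _ _⟩) h1
    linarith
  -- arithmetic conclusion
  set t := 1 - (1 - δ) ^ ((1 : ℝ) / 4) with htdef
  have hx0 : (0 : ℝ) < 1 - δ := by linarith
  have hr_lt : (1 - δ : ℝ) ^ ((1 : ℝ) / 4) < 1 :=
    Real.rpow_lt_one hx0.le (by linarith) (by norm_num)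
  have ht0 : 0 < t := by rw [htdef]; linarith
  have htδ : t ≤ δ := by
    have h := Real.rpow_le_rpow_of_exponent_ge hx0 (by linarith) (by norm_num :
      (1 : ℝ) / 4 ≤ 1)
    rw [Real.rpow_one] at h
    rw [htdef]
    linarith
  have hεsq : (0 : ℝ) < ε ^ 2 := by positivity
  have hlogle : Real.log (2 / t) ≤ N * ε ^ 2 / 32 := by
    have h := mul_le_mul_of_nonneg_right hNbig hεsq.le
    have he : 32 / ε ^ 2 * Real.log (2 / t) * ε ^ 2 = 32 * Real.log (2 / t) := by
      field_simp
    rw [he] at h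
    linarith
  have hexp : Real.exp (-(N * ε ^ 2 / 32)) ≤ t / 2 := by
    have h2t : (0 : ℝ) < t / 2 := by positivity
    rw [show t / 2 = Real.exp (Real.log (t / 2)) from (Real.exp_log h2t).symm]
    refine Real.exp_le_exp.2 ?_
    have hlg : Real.log (t / 2) = -Real.log (2 / t) := by
      rw [← Real.log_inv]
      congr 1
      rw [inv_div]
    rw [hlg]
    linarith
  calc (P {ω | ε < |SbarEmp X ω - Strue μ|}).toReal
      ≤ 2 * Real.exp (-(N * ε ^ 2 / 32)) := hPbad
    _ ≤ 2 * (t / 2) := by linarith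
    _ = t := by ring
    _ ≤ δ := htδ
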